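/- Let p ≥ 2 and define T(a) = |a|^{p-2} a for real a. Then there exists a constant C depending only on p such that for all real a, b: |T(a+b) − T(a)| ≤ C · |b| · (|a|^{p-2} + |b|^{p-2}). -/

import Mathlib

open Real Set

private lemma hasDerivAt_T (p : ℝ) (hp : 2 ≤ p) (x : ℝ) :
    HasDerivAt (fun y : ℝ => |y| ^ (p - 2) * y) ((p - 1) * |x| ^ (p - 2)) x := by
  rcases eq_or_ne x 0 with rfl | hx
  · rcases eq_or_lt_of_le hp with hp2 | hp2
    · -- p = 2
      have : (fun y : ℝ => |y| ^ (p - 2) * y) = fun y : ℝ => y := by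
        funext y; rw [← hp2]; simp
      rw [this]
      have : (p - 1) * |(0:ℝ)| ^ (p - 2) = 1 := by
        rw [← hp2]; norm_num
      rw [this]
      exact hasDerivAt_id 0
    · -- p > 2
      have h0 : (p - 1) * |(0:ℝ)| ^ (p - 2) = 0 := by
        rw [abs_zero, Real.zero_rpow (by linarith)]; ring
      rw [h0, hasDerivAt_iff_tendsto_slope]
      have heq : ∀ y ∈ ({(0:ℝ)}ᶜ : Set ℝ),
          slope (fun y : ℝ => |y| ^ (p - 2) * y) 0 y = |y| ^ (p - 2) := by
        intro y hy
        have hy0 : y ≠ 0 := hy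
        simp only [slope, vsub_eq_sub, zero_mul, sub_zero, mul_comm, smul_eq_mul, Pi.sub_apply]
        field_simp
      have hcont : Filter.Tendsto (fun y : ℝ => |y| ^ (p - 2)) (nhds 0) (nhds 0) := by
        have : ContinuousAt (fun y : ℝ => |y| ^ (p - 2)) 0 := by
          exact (Real.continuousAt_rpow_const _ _ (Or.inr (by linarith))).comp
            continuous_abs.continuousAt
        have h00 : |(0:ℝ)| ^ (p - 2) = 0 := by
          rw [abs_zero, Real.zero_rpow (by linarith)]
        simpa [h00, Real.zero_rpow (show p - 2 ≠ 0 by linarith)] using this.tendsto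
      refine Filter.Tendsto.congr' ?_ (hcont.mono_left nhdsWithin_le_nhds)
      filter_upwards [self_mem_nhdsWithin] with y hy
      exact (heq y hy).symm
  · have habs : HasDerivAt (fun y : ℝ => |y|) (SignType.sign x : ℝ) x := hasDerivAt_abs hx
    have h1 : HasDerivAt (fun y : ℝ => |y| ^ (p - 2))
        ((SignType.sign x : ℝ) * (p - 2) * |x| ^ (p - 2 - 1)) x :=
      habs.rpow_const (Or.inl (abs_ne_zero.mpr hx))
    have h2 := h1.mul (hasDerivAt_id x)
    have hax : (0:ℝ) < |x| := abs_pos.mpr hx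
    have hsx : (SignType.sign x : ℝ) * x = |x| := by
      rcases lt_or_gt_of_ne hx with h | h
      · simp [h, abs_of_neg h]
      · simp [h, abs_of_pos h]
    have hpow : |x| ^ (p - 2 - 1) * |x| = |x| ^ (p - 2) := by
      rw [← Real.rpow_add_one hax.ne' (p - 2 - 1)]
      ring_nf
    have hgoal : (SignType.sign x : ℝ) * (p - 2) * |x| ^ (p - 2 - 1) * id x + |x| ^ (p - 2) * 1
        = (p - 1) * |x| ^ (p - 2) := by
      simp only [id_eq, mul_one]
      rw [show (SignType.sign x : ℝ) * (p - 2) * |x| ^ (p - 2 - 1) * x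
          = (p - 2) * (|x| ^ (p - 2 - 1) * ((SignType.sign x : ℝ) * x)) from by ring, hsx, hpow]
      ring
    rw [← hgoal]
    exact h2

/-- Nonlinear commutator-type pointwise estimate for `T a = |a|^(p-2) * a`, `p ≥ 2`. -/
theorem stmt_0 (p : ℝ) (hp : 2 ≤ p) :
    ∃ C > 0, ∀ a b : ℝ,
      |(|a + b| ^ (p - 2) * (a + b)) - (|a| ^ (p - 2) * a)|
        ≤ C * |b| * (|a| ^ (p - 2) + |b| ^ (p - 2)) := by
  have h2pos : (0:ℝ) < (2:ℝ) ^ (p - 2) := Real.rpow_pos_of_pos two_pos _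
  refine ⟨(p - 1) * 2 ^ (p - 2), mul_pos (by linarith) h2pos, fun a b => ?_⟩
  set M : ℝ := |a| + |b| with hM
  have hxbound : ∀ x ∈ uIcc a (a + b), |x| ≤ M := by
    intro x hx
    rw [uIcc, mem_Icc] at hx
    have h1 : -M ≤ a ⊓ (a + b) :=
      le_inf (by simp only [hM]; linarith [neg_abs_le a, abs_nonneg b])
        (by simp only [hM]; linarith [neg_abs_le a, neg_abs_le b])
    have h2 : a ⊔ (a + b) ≤ M :=
      sup_le (by simp only [hM]; linarith [le_abs_self a, abs_nonneg b])
        (by simp only [hM]; linarith [le_abs_self a, le_abs_self b])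
    exact abs_le.mpr ⟨le_trans h1 hx.1, le_trans hx.2 h2⟩
  have key := Convex.norm_image_sub_le_of_norm_hasDerivWithin_le
    (f := fun y : ℝ => |y| ^ (p - 2) * y) (f' := fun y : ℝ => (p - 1) * |y| ^ (p - 2))
    (s := uIcc a (a + b)) (C := (p - 1) * M ^ (p - 2))
    (fun x _ => (hasDerivAt_T p hp x).hasDerivWithinAt)
    (fun x hx => by
      have h1 : |x| ^ (p - 2) ≤ M ^ (p - 2) :=
        Real.rpow_le_rpow (abs_nonneg x) (hxbound x hx) (by linarith)
      have h2 : (0:ℝ) ≤ |x| ^ (p - 2) := Real.rpow_nonneg (abs_nonneg x) _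
      show ‖(p - 1) * |x| ^ (p - 2)‖ ≤ (p - 1) * M ^ (p - 2)
      rw [Real.norm_eq_abs, abs_of_nonneg (mul_nonneg (by linarith) h2)]
      exact mul_le_mul_of_nonneg_left h1 (by linarith))
    (convex_uIcc a (a + b)) left_mem_uIcc right_mem_uIcc
  simp only [Real.norm_eq_abs, add_sub_cancel_left] at key
  refine key.trans ?_
  have hMle : M ^ (p - 2) ≤ 2 ^ (p - 2) * (|a| ^ (p - 2) + |b| ^ (p - 2)) := by
    have hm : M ≤ 2 * max |a| |b| := by
      rw [hM, two_mul]
      exact add_le_add (le_max_left _ _) (le_max_right _ _)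
    have h1 : M ^ (p - 2) ≤ (2 * max |a| |b|) ^ (p - 2) :=
      Real.rpow_le_rpow (by positivity) hm (by linarith)
    have h2 : (2 * max |a| |b|) ^ (p - 2) = 2 ^ (p - 2) * (max |a| |b|) ^ (p - 2) :=
      Real.mul_rpow (by norm_num) (le_max_of_le_left (abs_nonneg a))
    have h3 : (max |a| |b|) ^ (p - 2) ≤ |a| ^ (p - 2) + |b| ^ (p - 2) := by
      rcases max_cases |a| |b| with ⟨h, _⟩ | ⟨h, _⟩ <;> rw [h]
      · nlinarith [Real.rpow_nonneg (abs_nonneg b) (p - 2)]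
      · nlinarith [Real.rpow_nonneg (abs_nonneg a) (p - 2)]
    calc M ^ (p - 2) ≤ 2 ^ (p - 2) * (max |a| |b|) ^ (p - 2) := h1.trans_eq h2
      _ ≤ 2 ^ (p - 2) * (|a| ^ (p - 2) + |b| ^ (p - 2)) := by nlinarith
  have hb : (0:ℝ) ≤ |b| := abs_nonneg b
  nlinarith [Real.rpow_nonneg (abs_nonneg a) (p - 2), Real.rpow_nonneg (abs_nonneg b) (p - 2),
    mul_le_mul_of_nonneg_left hMle (show (0:ℝ) ≤ (p - 1) * |b| by nlinarith)]
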